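/- Let λ : (0,∞) → ℝ be continuous with λ(ρ) ≤ α < 0 for all ρ ∈ (0,r] and 1/(ρ·λ(ρ)) = O(ρ^{2k-1}) as ρ → 0 for some integer k ≥ 1. Fix c > 0 and 0 < r. Let h : [0,T') → (0,∞) be the maximal solution of h'(t)/h(t) = c·λ(h(t)·r), h(0) = 1. Then h is strictly decreasing, T' < ∞, h(t) → 0 as t → T', and there is C > 0 with h(t)^{-2k} ≤ C/(T'-t) near T'. -/

import Mathlib

open Filter Asymptotics

set_option maxHeartbeats 1600000 in
/-- Mean curvature flow analogue below the minimal radius: if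
`λ ≤ α < 0` on `(0,r]` and `1/(ρλ(ρ)) = O(ρ^{2k-1})` as `ρ → 0⁺`, then the
maximal solution of `h'/h = cλ(hr)`, `h(0) = 1`, is strictly decreasing, exists
only for finite time (no global solution), `h(t) → 0` as `t → T'`, and
`h(t)^{-2k} ≤ C/(T'-t)` near `T'`. -/
theorem stmt14 (lam : ℝ → ℝ) (hcont : ContinuousOn lam (Set.Ioi 0))
    (k : ℕ) (hk : 1 ≤ k) (α : ℝ) (hα : α < 0)
    (c r : ℝ) (hc : 0 < c) (hr : 0 < r)
    (hbound : ∀ ρ, 0 < ρ → ρ ≤ r → lam ρ ≤ α)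
    (hO : (fun ρ => 1 / (ρ * lam ρ))
      =O[nhdsWithin 0 (Set.Ioi 0)] fun ρ => ρ ^ (2 * k - 1))
    (T' : ℝ) (hT'0 : 0 < T')
    (h : ℝ → ℝ) (hh0 : h 0 = 1)
    (hpos : ∀ t ∈ Set.Ico (0 : ℝ) T', 0 < h t)
    (hode : ∀ t ∈ Set.Ico (0 : ℝ) T', HasDerivAt h (c * lam (h t * r) * h t) t)
    (hmax : ∀ (S : ℝ → ℝ) (T₂ : ℝ), T' < T₂ → S 0 = 1 →
      (∀ t ∈ Set.Ico (0 : ℝ) T₂, 0 < S t ∧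
        HasDerivAt S (c * lam (S t * r) * S t) t) → False) :
    StrictAntiOn h (Set.Ico 0 T')
    ∧ (¬ ∃ S : ℝ → ℝ, S 0 = 1 ∧ ∀ t ∈ Set.Ici (0 : ℝ), 0 < S t ∧
        HasDerivAt S (c * lam (S t * r) * S t) t)
    ∧ Tendsto h (nhdsWithin T' (Set.Iio T')) (nhds 0)
    ∧ ∃ C > (0 : ℝ), ∃ t₀ ∈ Set.Ico (0 : ℝ) T',
        ∀ t ∈ Set.Ico t₀ T', (h t)⁻¹ ^ (2 * k) ≤ C / (T' - t) := by
  -- continuity of h on Ico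
  have hhc : ∀ t ∈ Set.Ico (0 : ℝ) T', ContinuousAt h t := by
    intro t ht; exact (hode t ht).continuousAt
  -- F x := c * lam (x*r) * x  is < 0 on (0, 1]
  have hFneg : ∀ x : ℝ, 0 < x → x ≤ 1 → c * lam (x * r) * x < 0 := by
    intro x hx hx1
    have hxr : 0 < x * r := mul_pos hx hr
    have hlx : lam (x * r) ≤ α := hbound _ hxr (by nlinarith)
    have h1 : 0 < (c * x) * (-(lam (x * r))) :=
      mul_pos (mul_pos hc hx) (neg_pos.2 (hlx.trans_lt hα))
    nlinarith
  -- Part A : h ≤ 1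
  have hle1 : ∀ t ∈ Set.Ico (0 : ℝ) T', h t ≤ 1 := by
    intro t₁ ht₁
    by_contra hgt
    push_neg at hgt
    have hhcc : ContinuousOn h (Set.Icc 0 t₁) := fun s hs =>
      (hhc s ⟨hs.1, lt_of_le_of_lt hs.2 ht₁.2⟩).continuousWithinAt
    set A : Set ℝ := {s | s ∈ Set.Icc (0:ℝ) t₁ ∧ h s ≤ 1} with hA
    have hA0 : (0:ℝ) ∈ A := ⟨⟨le_refl _, ht₁.1⟩, le_of_eq hh0⟩
    have hAne : A.Nonempty := ⟨0, hA0⟩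
    have hAbdd : BddAbove A := ⟨t₁, fun s hs => hs.1.2⟩
    have hAclosed : IsClosed A := by
      have : A = Set.Icc 0 t₁ ∩ h ⁻¹' (Set.Iic 1) := by ext s; simp [hA, and_comm]
      rw [this]
      exact hhcc.preimage_isClosed_of_isClosed isClosed_Icc isClosed_Iic
    set u : ℝ := sSup A with hu
    have huA : u ∈ A := hAclosed.csSup_mem hAne hAbdd
    have hu1 : h u ≤ 1 := huA.2
    have hut₁ : u < t₁ := lt_of_le_of_ne (csSup_le hAne (fun s hs => hs.1.2))
      (fun he => absurd (he ▸ hu1) (not_le.2 hgt))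
    have huI : u ∈ Set.Ico (0:ℝ) T' := ⟨huA.1.1, lt_of_lt_of_le hut₁ ht₁.2.le⟩
    have hder := hode u huI
    have hdu : c * lam (h u * r) * h u < 0 := hFneg _ (hpos u huI) hu1
    have hslope : Tendsto (slope h u) (nhdsWithin u (Set.Ioi u))
        (nhds (c * lam (h u * r) * h u)) :=
      ((hasDerivAt_iff_tendsto_slope.1 hder)).mono_left
        (nhdsWithin_mono _ (fun x hx => ne_of_gt hx))
    have hev : ∀ᶠ s in nhdsWithin u (Set.Ioi u), slope h u s < 0 :=
      hslope.eventually_lt_const hdu |>.mono (by intro s hs; simpa using hs)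
    have hev2 : ∀ᶠ s in nhdsWithin u (Set.Ioi u), s < t₁ := by
      filter_upwards [Ioo_mem_nhdsGT_of_mem ⟨le_refl u, hut₁⟩] with s hs using hs.2
    obtain ⟨s, hs1, hs2⟩ := ((hev.and hev2).and self_mem_nhdsWithin).exists
    have hus : u < s := hs2
    have hhs : h s < h u := by
      have h2 : (h s - h u) / (s - u) < 0 := by
        have := hs1.1; rwa [slope_def_field] at this
      have h3 := mul_neg_of_neg_of_pos h2 (sub_pos.2 hus)
      rw [div_mul_cancel₀ _ (sub_ne_zero.2 (ne_of_gt hus))] at h3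
      linarith
    have hsA : s ∈ A := ⟨⟨huA.1.1.trans hus.le, hs1.2.le⟩, le_trans hhs.le hu1⟩
    exact absurd (le_csSup hAbdd hsA) (not_le.2 hus)
  -- Part B : strict antitonicity
  have hanti : StrictAntiOn h (Set.Ico 0 T') := by
    refine strictAntiOn_of_deriv_neg (convex_Ico 0 T')
      (fun t ht => (hhc t ht).continuousWithinAt) ?_
    intro x hx
    rw [interior_Ico] at hx
    have hx' : x ∈ Set.Ico (0:ℝ) T' := ⟨hx.1.le, hx.2⟩
    rw [(hode x hx').deriv]
    exact hFneg _ (hpos x hx') (hle1 x hx')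
  -- choice of δ : lam < 0 slightly past r
  obtain ⟨b, hb1, hFnegb, hgcont⟩ :
      ∃ b : ℝ, 1 < b ∧ (∀ x ∈ Set.Ioo (0:ℝ) b, c * lam (x * r) * x < 0)
        ∧ ContinuousOn (fun s => (-(c * lam (s * r) * s))⁻¹) (Set.Ioo (0:ℝ) b) := by
    have hlamr : ContinuousAt lam r :=
      (hcont r (Set.mem_Ioi.2 hr)).continuousAt (isOpen_Ioi.mem_nhds hr)
    have hev : ∀ᶠ ρ in nhds r, lam ρ < 0 :=
      hlamr.eventually_lt_const ((hbound r hr le_rfl).trans_lt hα)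
    obtain ⟨ε, hε, hball⟩ := Metric.eventually_nhds_iff.1 hev
    have hFnegb' : ∀ x ∈ Set.Ioo (0:ℝ) (1 + ε / (2 * r)), c * lam (x * r) * x < 0 := by
      intro x hx
      rcases le_or_gt x 1 with hx1 | hx1
      · exact hFneg x hx.1 hx1
      · have hlx : lam (x * r) < 0 := by
          apply hball
          have heq : x * r - r = (x - 1) * r := by ring
          rw [Real.dist_eq, heq, abs_of_pos (by nlinarith)]
          have hd : x - 1 < ε / (2 * r) := by linarith [hx.2]
          calc (x - 1) * r < (ε / (2 * r)) * r := by nlinarith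
            _ = ε / 2 := by field_simp
            _ < ε := by linarith
        have := mul_pos (mul_pos hc hx.1) (neg_pos.2 hlx)
        nlinarith
    refine ⟨1 + ε / (2 * r),
      by nlinarith [div_pos hε (by positivity : (0:ℝ) < 2 * r)], hFnegb', ?_⟩
    intro x hx
    have hFc : ContinuousWithinAt (fun s => c * lam (s * r) * s) (Set.Ioo (0:ℝ) (1 + ε / (2*r))) x := by
      refine (ContinuousWithinAt.mul (ContinuousWithinAt.mul continuousWithinAt_const ?_)
        continuousWithinAt_id)
      have h1 : ContinuousWithinAt lam (Set.Ioi 0) (x * r) :=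
        hcont (x * r) (Set.mem_Ioi.2 (mul_pos hx.1 hr))
      have h2 : ContinuousWithinAt (fun s : ℝ => s * r) (Set.Ioo (0:ℝ) (1 + ε / (2*r))) x :=
        (continuous_mul_right r).continuousWithinAt
      exact ContinuousWithinAt.comp (g := lam) (f := fun s : ℝ => s * r) h1 h2
        (fun s hs => Set.mem_Ioi.2 (mul_pos hs.1 hr))
    exact (hFc.neg).inv₀ (ne_of_gt (neg_pos.2 (hFnegb' x hx)))
  set g0 : ℝ → ℝ := fun s => (-(c * lam (s * r) * s))⁻¹ with hg0def
  have hg0pos : ∀ x ∈ Set.Ioo (0:ℝ) b, 0 < g0 x := by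
    intro x hx
    exact inv_pos.2 (by simpa using neg_pos.2 (hFnegb x hx))
  set G : ℝ → ℝ := fun x => ∫ s in x..(1:ℝ), g0 s with hGdef
  -- FTC : derivative of G
  have hGderiv : ∀ x ∈ Set.Ioo (0:ℝ) b, HasDerivAt G (-(g0 x)) x := by
    intro x hx
    have hsub : Set.uIcc x 1 ⊆ Set.Ioo (0:ℝ) b :=
      (Set.ordConnected_Ioo).uIcc_subset hx ⟨zero_lt_one, hb1⟩
    have hint : IntervalIntegrable g0 MeasureTheory.volume x 1 :=
      (hgcont.mono hsub).intervalIntegrable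
    have hmeas : StronglyMeasurableAtFilter g0 (nhds x) :=
      hgcont.stronglyMeasurableAtFilter isOpen_Ioo x hx
    have hca : ContinuousAt g0 x := hgcont.continuousAt (isOpen_Ioo.mem_nhds hx)
    exact intervalIntegral.integral_hasDerivAt_left hint hmeas hca
  -- the key identity  G (h t) = t
  have hmem : ∀ s ∈ Set.Ico (0:ℝ) T', h s ∈ Set.Ioo (0:ℝ) b :=
    fun s hs => ⟨hpos s hs, lt_of_le_of_lt (hle1 s hs) hb1⟩
  have hinvval : ∀ s ∈ Set.Ico (0:ℝ) T',
      -(g0 (h s)) * (c * lam (h s * r) * h s) = 1 := by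
    intro s hs
    have hF : c * lam (h s * r) * h s < 0 := hFneg _ (hpos s hs) (hle1 s hs)
    have e1 : -(g0 (h s)) = (c * lam (h s * r) * h s)⁻¹ := by
      simp [hg0def, neg_inv]
    rw [e1, inv_mul_cancel₀ (ne_of_lt hF)]
  have hGh : ∀ t ∈ Set.Ico (0 : ℝ) T', G (h t) = t := by
    intro t ht
    have key : ∀ x ∈ Set.Icc 0 t, (fun s => G (h s) - s) x = (fun s => G (h s) - s) 0 := by
      apply constant_of_has_deriv_right_zero
      · intro s hs
        have hsI : s ∈ Set.Ico 0 T' := ⟨hs.1, lt_of_le_of_lt hs.2 ht.2⟩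
        exact (((hGderiv _ (hmem s hsI)).continuousAt.comp (hhc s hsI)).sub
          continuousAt_id).continuousWithinAt
      · intro s hs
        have hsI : s ∈ Set.Ico 0 T' := ⟨hs.1, lt_of_le_of_lt hs.2.le ht.2⟩
        have hd1 : HasDerivAt (fun s => G (h s))
            (-(g0 (h s)) * (c * lam (h s * r) * h s)) s :=
          (hGderiv _ (hmem s hsI)).comp s (hode s hsI)
        rw [hinvval s hsI] at hd1
        have hd2 := hd1.sub (hasDerivAt_id' s)
        simpa only [Pi.sub_def, sub_self] using hd2.hasDerivWithinAt
    have hkey := key t ⟨ht.1, le_refl t⟩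
    have hG1 : G 1 = 0 := by simp [hGdef]
    simp only [hh0, hG1] at hkey
    linarith [hkey]
  -- the inf of h, the limit at T'
  set L : ℝ := sInf (h '' Set.Ioo 0 T') with hLdef
  have hIoone : (Set.Ioo (0:ℝ) T').Nonempty := ⟨T'/2, half_pos hT'0, half_lt_self hT'0⟩
  have hbdd : BddBelow (h '' Set.Ioo 0 T') := by
    refine ⟨0, ?_⟩
    rintro y ⟨s, hs, rfl⟩
    exact (hpos s ⟨hs.1.le, hs.2⟩).le
  have hL0 : 0 ≤ L := le_csInf (hIoone.image h)
    (by rintro y ⟨s, hs, rfl⟩; exact (hpos s ⟨hs.1.le, hs.2⟩).le)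
  have hLtend : Tendsto h (nhdsWithin T' (Set.Iio T')) (nhds L) :=
    AntitoneOn.tendsto_nhdsWithin_Ioo_left hIoone
      ((hanti.antitoneOn).mono (Set.Ioo_subset_Ico_self)) hbdd
  have hLle : ∀ t ∈ Set.Ioo (0:ℝ) T', L ≤ h t :=
    fun t ht => csInf_le hbdd (Set.mem_image_of_mem h ht)
  have hLleIco : ∀ t ∈ Set.Ico (0:ℝ) T', L ≤ h t := by
    intro t ht
    rcases eq_or_lt_of_le ht.1 with he | hlt
    · rw [← he, hh0]
      exact le_trans (hLle (T'/2) ⟨half_pos hT'0, half_lt_self hT'0⟩)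
        (hle1 (T'/2) ⟨(half_pos hT'0).le, half_lt_self hT'0⟩)
    · exact hLle t ⟨hlt, ht.2⟩
  -- Part G : L = 0
  have hLzero : L = 0 := by
    by_contra hL0'
    have hL : 0 < L := lt_of_le_of_ne hL0 (Ne.symm hL0')
    have hL1 : L ≤ 1 := le_trans (hLle (T'/2) ⟨half_pos hT'0, half_lt_self hT'0⟩)
      (hle1 (T'/2) ⟨(half_pos hT'0).le, half_lt_self hT'0⟩)
    set binv : ℝ := (1 + b) / 2 with hbinvdef
    have hbinv1 : 1 < binv := by rw [hbinvdef]; linarith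
    have hbinvb : binv < b := by rw [hbinvdef]; linarith
    set D : Set ℝ := Set.Icc (L/16) binv with hDdef
    have hDsub : D ⊆ Set.Ioo (0:ℝ) b := fun x hx =>
      ⟨lt_of_lt_of_le (by positivity) hx.1, lt_of_le_of_lt hx.2 hbinvb⟩
    have hGcont : ContinuousOn G D := fun x hx =>
      (hGderiv x (hDsub hx)).continuousAt.continuousWithinAt
    have hGanti : StrictAntiOn G D := by
      refine strictAntiOn_of_deriv_neg (convex_Icc _ _) hGcont ?_
      intro x hx
      simp only [hDdef, interior_Icc] at hx
      rw [(hGderiv x (hDsub (Set.Ioo_subset_Icc_self hx))).deriv]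
      exact neg_neg_iff_pos.2 (hg0pos x (hDsub (Set.Ioo_subset_Icc_self hx)))
    -- membership facts
    have h16D : L/16 ∈ D := ⟨le_refl _, by linarith⟩
    have h8D : L/8 ∈ D := ⟨by linarith, by linarith⟩
    have h4D : L/4 ∈ D := ⟨by linarith, by linarith⟩
    have h1D : (1:ℝ) ∈ D := ⟨by linarith, hbinv1.le⟩
    have hbinvD : binv ∈ D := ⟨by linarith, le_refl _⟩
    have hG1 : G 1 = 0 := by simp [hGdef]
    have hG40 : 0 ≤ G (L/4) := by
      rw [← hG1]; exact (hGanti.le_iff_ge h1D h4D).2 (by linarith)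
    have hT'le : T' ≤ G (L/4) := by
      by_contra hcon
      push_neg at hcon
      have htI : G (L/4) ∈ Set.Ico (0:ℝ) T' := ⟨hG40, hcon⟩
      have hident := hGh _ htI
      have hht : L/4 ≤ h (G (L/4)) := by linarith [hLleIco _ htI]
      have hhtD : h (G (L/4)) ∈ D :=
        ⟨by linarith, by linarith [hle1 _ htI]⟩
      have hstrict : G (h (G (L/4))) < G (L/4) := hGanti h4D hhtD (by linarith [hLleIco _ htI])
      rw [hident] at hstrict
      exact lt_irrefl _ hstrict
    -- the inverse function of G on D
    set J : Set ℝ := Set.Icc (G binv) (G (L/16)) with hJdef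
    have hsurj : J ⊆ G '' D := by
      rw [hJdef, hDdef]
      exact intermediate_value_Icc' (by linarith : L/16 ≤ binv) hGcont
    set Finv : ℝ → ℝ := Function.invFunOn G D with hFinvdef
    have hFmem : ∀ y ∈ J, Finv y ∈ D ∧ G (Finv y) = y := by
      intro y hy
      obtain ⟨x, hxD, hGx⟩ := hsurj hy
      exact ⟨Function.invFunOn_mem ⟨x, hxD, hGx⟩, Function.invFunOn_eq ⟨x, hxD, hGx⟩⟩
    have hFG : ∀ x ∈ D, Finv (G x) = x := fun x hx => (hGanti.injOn).leftInvOn_invFunOn hx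
    have hGJ : ∀ x ∈ D, G x ∈ J := fun x hx =>
      ⟨(hGanti.le_iff_ge hbinvD hx).2 hx.2, (hGanti.le_iff_ge hx h16D).2 hx.1⟩
    have hT2 : T' < G (L/8) :=
      lt_of_le_of_lt hT'le (hGanti h8D h4D (by linarith))
    have hGb0 : G binv < 0 := by
      rw [← hG1]; exact hGanti h1D hbinvD hbinv1
    have hG816 : G (L/8) < G (L/16) := hGanti h16D h8D (by linarith)
    -- for t in [0, G(L/8)): location of Finv t
    have hloc : ∀ t ∈ Set.Ico (0:ℝ) (G (L/8)),
        Finv t ∈ Set.Ioo (L/8) binv ∧ Finv t ≤ 1 ∧ G (Finv t) = t := by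
      intro t ht
      have htJ : t ∈ J := ⟨by linarith [ht.1, hGb0], by linarith [ht.2, hG816]⟩
      obtain ⟨hxD, hGx⟩ := hFmem t htJ
      have hx1 : Finv t ≤ 1 := by
        have : G 1 ≤ G (Finv t) := by rw [hG1, hGx]; exact ht.1
        exact (hGanti.le_iff_ge h1D hxD).1 this
      have hx8 : L/8 < Finv t := by
        have : G (Finv t) < G (L/8) := by rw [hGx]; exact ht.2
        by_contra hcon
        push_neg at hcon
        exact absurd ((hGanti.le_iff_ge h8D hxD).2 hcon) (not_le.2 this)
      exact ⟨⟨hx8, lt_of_le_of_lt hx1 hbinv1⟩, hx1, hGx⟩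
    -- continuity of Finv on the relevant open interval
    have hFinvCont : ∀ t ∈ Set.Ico (0:ℝ) (G (L/8)), ContinuousAt Finv t := by
      intro t ht
      have hmono : StrictMonoOn (fun y => -(Finv y)) J := by
        intro y1 hy1 y2 hy2 hlt
        obtain ⟨hx1D, hG1'⟩ := hFmem y1 hy1
        obtain ⟨hx2D, hG2'⟩ := hFmem y2 hy2
        simp only [neg_lt_neg_iff]
        by_contra hcon
        push_neg at hcon
        have := (hGanti.le_iff_ge hx2D hx1D).2 hcon
        rw [hG1', hG2'] at this
        exact absurd this (not_le.2 hlt)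
      have htIoo : t ∈ Set.Ioo (G binv) (G (L/16)) :=
        ⟨by linarith [ht.1, hGb0], by linarith [ht.2, hG816]⟩
      have hJnhds : J ∈ nhds t :=
        Filter.mem_of_superset (isOpen_Ioo.mem_nhds htIoo) Set.Ioo_subset_Icc_self
      obtain ⟨hxIoo, hx1, hGx⟩ := hloc t ht
      have himg : (fun y => -(Finv y)) '' J ∈ nhds (-(Finv t)) := by
        have hsup : Set.Ioo (-binv) (-(L/16)) ⊆ (fun y => -(Finv y)) '' J := by
          intro z hz
          have hzD : -z ∈ D := ⟨by linarith [hz.2], by linarith [hz.1]⟩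
          refine ⟨G (-z), hGJ _ hzD, ?_⟩
          have hfg : Finv (G (-z)) = -z := hFG _ hzD
          simp [hfg]
        refine Filter.mem_of_superset (isOpen_Ioo.mem_nhds ?_) hsup
        constructor
        · simp only [neg_lt_neg_iff]; exact hxIoo.2
        · have : L/16 < Finv t := by linarith [hxIoo.1]
          linarith
      have hc1 : ContinuousAt (fun y => -(Finv y)) t :=
        StrictMonoOn.continuousAt_of_image_mem_nhds hmono hJnhds himg
      have := hc1.neg
      convert this using 1; funext y; simp
    -- the extension solves the ODE on [0, G(L/8))
    have hFinv0 : Finv 0 = 1 := by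
      rw [← hG1]; exact hFG 1 h1D
    refine hmax Finv (G (L/8)) hT2 hFinv0 ?_
    intro t ht
    obtain ⟨hxIoo, hx1, hGx⟩ := hloc t ht
    have hx0b : Finv t ∈ Set.Ioo (0:ℝ) b :=
      ⟨lt_trans (by positivity) hxIoo.1, lt_trans hxIoo.2 hbinvb⟩
    refine ⟨lt_trans (by positivity) hxIoo.1, ?_⟩
    have hev : ∀ᶠ y in nhds t, G (Finv y) = y := by
      have htIoo : t ∈ Set.Ioo (G binv) (G (L/16)) :=
        ⟨by linarith [ht.1, hGb0], by linarith [ht.2, hG816]⟩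
      filter_upwards [isOpen_Ioo.mem_nhds htIoo] with y hy
      exact (hFmem y (Set.Ioo_subset_Icc_self hy)).2
    have hder := HasDerivAt.of_local_left_inverse (hFinvCont t ht)
      (hGderiv _ hx0b) (ne_of_lt (neg_neg_iff_pos.2 (hg0pos _ hx0b))) hev
    have heq : (-(g0 (Finv t)))⁻¹ = c * lam (Finv t * r) * Finv t := by
      have e1 : -(g0 (Finv t)) = (c * lam (Finv t * r) * Finv t)⁻¹ := by
        simp [hg0def, neg_inv]
      rw [e1, inv_inv]
    rwa [heq] at hder
  rw [hLzero] at hLtend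
  refine ⟨hanti, ?_, hLtend, ?_⟩
  · rintro ⟨S, hS0, hS⟩
    exact hmax S (T' + 1) (by linarith) hS0 (fun t ht => hS t ht.1)
  · -- Part H : the rate
    obtain ⟨C₁, hC₁, hbig⟩ := hO.exists_pos
    have hbev := hbig.bound
    rw [eventually_nhdsWithin_iff] at hbev
    obtain ⟨ε, hε, hball⟩ := Metric.eventually_nhds_iff.1 hbev
    set m : ℝ := min (ε / (2 * r)) 1 with hmdef
    have hm0 : 0 < m := lt_min (by positivity) one_pos
    have hm1 : m ≤ 1 := min_le_right _ _
    have hmε : m * r ≤ ε / 2 := by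
      have h1 : m ≤ ε / (2 * r) := min_le_left _ _
      calc m * r ≤ (ε / (2 * r)) * r := by nlinarith
        _ = ε / 2 := by field_simp
    set C₂ : ℝ := C₁ * r ^ (2 * k) / c with hC₂def
    have hC₂ : 0 < C₂ := by positivity
    set C₃ : ℝ := C₂ / (2 * k) with hC₃def
    have h2k : (0:ℝ) < 2 * k := by
      have : (1:ℝ) ≤ (k:ℝ) := by exact_mod_cast hk
      linarith
    have hC₃ : 0 < C₃ := div_pos hC₂ h2k
    -- pointwise bound on g0 near 0
    have hg0b : ∀ s : ℝ, 0 < s → s < m → g0 s ≤ C₂ * s ^ (2 * k - 1) := by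
      intro s hs hsm
      have hρ : 0 < s * r := mul_pos hs hr
      have hρε : s * r < ε := by nlinarith [hmε]
      have hsr : s * r ≤ r := by nlinarith [hm1]
      have hν : 0 < -(lam (s * r)) :=
        neg_pos.2 (lt_of_le_of_lt (hbound _ hρ hsr) hα)
      have hb := hball (y := s * r) (by rw [Real.dist_eq]; rw [sub_zero, abs_of_pos hρ]; exact hρε)
        (Set.mem_Ioi.2 hρ)
      have hnorm1 : ‖1 / (s * r * lam (s * r))‖ = 1 / (s * r * -(lam (s * r))) := by
        rw [Real.norm_eq_abs, abs_div, abs_one, abs_mul, abs_of_pos hρ,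
          abs_of_neg (by linarith : lam (s * r) < 0)]
      have hnorm2 : ‖(s * r) ^ (2 * k - 1)‖ = (s * r) ^ (2 * k - 1) := by
        rw [Real.norm_eq_abs, abs_of_pos (pow_pos hρ _)]
      rw [hnorm1, hnorm2] at hb
      have e : g0 s = (r / c) * (1 / (s * r * -(lam (s * r)))) := by
        have e0 : g0 s = (c * s * -(lam (s * r)))⁻¹ := by
          simp only [hg0def]
          congr 1
          ring
        rw [e0]
        have hne1 : (0:ℝ) < -(c * s * lam (s * r)) := by
          nlinarith [mul_pos (mul_pos hc hs) hν]
        have hne2 : (0:ℝ) < -(c * (s * r * lam (s * r))) := by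
          nlinarith [mul_pos (mul_pos hc hρ) hν]
        field_simp
      have e2 : g0 s ≤ (r / c) * (C₁ * (s * r) ^ (2 * k - 1)) := by
        rw [e]
        exact mul_le_mul_of_nonneg_left hb (by positivity)
      have hkk : 2 * k - 1 + 1 = 2 * k := by omega
      have hrpow : r ^ (2 * k) = r ^ (2 * k - 1) * r := by rw [← pow_succ, hkk]
      calc g0 s ≤ (r / c) * (C₁ * (s * r) ^ (2 * k - 1)) := e2
        _ = C₂ * s ^ (2 * k - 1) := by rw [hC₂def, mul_pow, hrpow]; field_simp
    -- choose t₀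
    have hev1 : ∀ᶠ t in nhdsWithin T' (Set.Iio T'), h t < m :=
      hLtend.eventually_lt_const hm0
    have hev2 : ∀ᶠ t in nhdsWithin T' (Set.Iio T'), t ∈ Set.Ioo 0 T' := by
      filter_upwards [Ioo_mem_nhdsLT_of_mem (Set.mem_Ioc.2 ⟨hT'0, le_refl T'⟩)] with s hs
        using hs
    obtain ⟨t₀, ht₀m, ht₀I⟩ := (hev1.and hev2).exists
    have ht₀Ico : t₀ ∈ Set.Ico (0:ℝ) T' := ⟨ht₀I.1.le, ht₀I.2⟩
    refine ⟨C₃, hC₃, t₀, ht₀Ico, ?_⟩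
    intro t ht
    have htIco : t ∈ Set.Ico (0:ℝ) T' := ⟨ht₀Ico.1.trans ht.1, ht.2⟩
    have hhtm : h t < m :=
      lt_of_le_of_lt (hanti.antitoneOn ht₀Ico htIco ht.1) ht₀m
    have hht0 : 0 < h t := hpos t htIco
    -- for every t₂ ∈ (t, T') : t₂ - t ≤ C₃ * (h t)^(2k)
    have hkey : ∀ t₂ ∈ Set.Ioo t T', t₂ ≤ t + C₃ * (h t) ^ (2 * k) := by
      intro t₂ ht₂
      have ht₂Ico : t₂ ∈ Set.Ico (0:ℝ) T' := ⟨(ht₀Ico.1.trans ht.1).trans ht₂.1.le, ht₂.2⟩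
      have hht₂ : h t₂ ≤ h t := (hanti.antitoneOn htIco ht₂Ico ht₂.1.le)
      have hht₂0 : 0 < h t₂ := hpos t₂ ht₂Ico
      have h1b : (1:ℝ) ∈ Set.Ioo (0:ℝ) b := ⟨one_pos, hb1⟩
      have hint1 : IntervalIntegrable g0 MeasureTheory.volume 1 (h t) :=
        (hgcont.mono ((Set.ordConnected_Ioo).uIcc_subset h1b (hmem t htIco))).intervalIntegrable
      have hint2 : IntervalIntegrable g0 MeasureTheory.volume 1 (h t₂) :=
        (hgcont.mono ((Set.ordConnected_Ioo).uIcc_subset h1b (hmem t₂ ht₂Ico))).intervalIntegrable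
      have hint3 : IntervalIntegrable g0 MeasureTheory.volume (h t₂) (h t) :=
        (hgcont.mono ((Set.ordConnected_Ioo).uIcc_subset (hmem t₂ ht₂Ico)
          (hmem t htIco))).intervalIntegrable
      have heq : t₂ - t = ∫ s in (h t₂)..(h t), g0 s := by
        have e1 : G (h t) = t := hGh t htIco
        have e2 : G (h t₂) = t₂ := hGh t₂ ht₂Ico
        have e3 : (∫ s in (1:ℝ)..(h t), g0 s) - ∫ s in (1:ℝ)..(h t₂), g0 s
            = ∫ s in (h t₂)..(h t), g0 s :=
          intervalIntegral.integral_interval_sub_left hint1 hint2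
        have e4 : G (h t) = -∫ s in (1:ℝ)..(h t), g0 s := by
          rw [hGdef]; exact (intervalIntegral.integral_symm _ _)
        have e5 : G (h t₂) = -∫ s in (1:ℝ)..(h t₂), g0 s := by
          rw [hGdef]; exact (intervalIntegral.integral_symm _ _)
        rw [e1] at e4
        rw [e2] at e5
        linarith [e3, e4, e5]
      have hint4 : IntervalIntegrable (fun s => C₂ * s ^ (2 * k - 1))
          MeasureTheory.volume (h t₂) (h t) :=
        (continuous_const.mul (continuous_pow _)).intervalIntegrable _ _
      have hmono : (∫ s in (h t₂)..(h t), g0 s)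
          ≤ ∫ s in (h t₂)..(h t), C₂ * s ^ (2 * k - 1) := by
        refine intervalIntegral.integral_mono_on hht₂ hint3 hint4 ?_
        intro s hs
        exact hg0b s (lt_of_lt_of_le hht₂0 hs.1) (lt_of_le_of_lt hs.2 hhtm)
      have hval : (∫ s in (h t₂)..(h t), C₂ * s ^ (2 * k - 1))
          ≤ C₃ * (h t) ^ (2 * k) := by
        rw [intervalIntegral.integral_const_mul, integral_pow]
        have hkk : 2 * k - 1 + 1 = 2 * k := by omega
        rw [hkk]
        have hcast : ((2 * k - 1 : ℕ) : ℝ) + 1 = (2 * k : ℝ) := by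
          rw [Nat.cast_sub (by omega : 1 ≤ 2 * k)]
          push_cast
          ring
        rw [hcast]
        have hgap : C₃ * (h t) ^ (2 * k)
            - C₂ * (((h t) ^ (2 * k) - (h t₂) ^ (2 * k)) / (2 * k))
            = C₂ * (h t₂) ^ (2 * k) / (2 * k) := by
          rw [hC₃def]; field_simp; ring
        have hpos2 : 0 ≤ C₂ * (h t₂) ^ (2 * k) / (2 * k) := by positivity
        linarith [hgap, hpos2]
      have hfin := le_trans hmono hval
      rw [← heq] at hfin
      linarith [hfin]
    -- pass to the limit t₂ → T'
    have hlim : T' ≤ t + C₃ * (h t) ^ (2 * k) := by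
      have htd : Tendsto (fun t₂ : ℝ => t₂) (nhdsWithin T' (Set.Iio T')) (nhds T') :=
        tendsto_id.mono_left nhdsWithin_le_nhds
      refine le_of_tendsto htd ?_
      filter_upwards [Ioo_mem_nhdsLT_of_mem (Set.mem_Ioc.2 ⟨ht.2, le_refl T'⟩)] with t₂ ht₂
        using hkey t₂ ht₂
    have hD : 0 < T' - t := sub_pos.2 ht.2
    have hP : 0 < (h t) ^ (2 * k) := pow_pos hht0 _
    rw [inv_pow, inv_eq_one_div, div_le_div_iff₀ hP hD]
    nlinarith [hlim]
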